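/- Suppose that for all ε > 0 one has G_1(x) := Σ_{d ≤ √x} ψ(x/d) ≪_ε x^{1/4+ε}, where ψ(t) = t - ⌊t⌋ - 1/2. Then for all ε > 0 and x → ∞: Σ_{n ≤ x} τ̃(n) = (1/2) x log x + (γ - 1/2) x + (1/2) x^{1/2} + O_ε(x^{1/4+ε}). -/

import Mathlib

open Filter

noncomputable def psi (t : ℝ) : ℝ := t - (⌊t⌋ : ℝ) - 1 / 2

section Aux
open Finset Real Filter Topology

noncomputable def Hs (M : ℕ) : ℝ := ∑ d ∈ Finset.Icc 1 M, (d : ℝ)⁻¹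
noncomputable def gg (M : ℕ) : ℝ := Hs M - Real.log M - 1 / (2 * M)
noncomputable def ee (d : ℕ) : ℝ := 1 / (2 * d) + 1 / (2 * (d + 1)) - (Real.log (d + 1) - Real.log d)

lemma log_taylor2 {u : ℝ} (h0 : 0 < u) (h1 : u ≤ 1 / 2) :
    |Real.log (1 + u) - u + u ^ 2 / 2| ≤ 2 * u ^ 3 := by
  have h := Real.abs_log_sub_add_sum_range_le (x := -u) (by rw [abs_neg, abs_of_pos h0]; linarith) 2
  rw [abs_neg, abs_of_pos h0] at h
  have e1 : ∑ i ∈ range 2, (-u) ^ (i + 1) / ((i : ℝ) + 1) = -u + u ^ 2 / 2 := by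
    simp [Finset.sum_range_succ]; ring
  rw [e1, sub_neg_eq_add] at h
  have h2 : u ^ 3 / (1 - u) ≤ 2 * u ^ 3 := by
    rw [div_le_iff₀ (by linarith)]
    nlinarith [pow_pos h0 3]
  calc |Real.log (1 + u) - u + u ^ 2 / 2| = |-u + u ^ 2 / 2 + Real.log (1 + u)| := by
        ring_nf
      _ ≤ u ^ 3 / (1 - u) := by rw [show (2:ℕ)+1 = 3 from rfl] at h; exact h
      _ ≤ 2 * u ^ 3 := h2

lemma ee_bound {d : ℕ} (hd : 2 ≤ d) : |ee d| ≤ 3 / (d : ℝ) ^ 3 := by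
  have hd0 : (0 : ℝ) < d := by positivity
  have hd2 : (2 : ℝ) ≤ d := by exact_mod_cast hd
  set u : ℝ := 1 / d with hu
  have hu0 : 0 < u := by positivity
  have hu1 : u ≤ 1 / 2 := by rw [hu, div_le_div_iff₀ hd0 (by norm_num)]; linarith
  have hlog : Real.log (d + 1) - Real.log d = Real.log (1 + u) := by
    rw [← Real.log_div (by positivity) (ne_of_gt hd0)]
    rw [hu]
    field_simp
  have key : ee d = (Real.log (1 + u) - u + u ^ 2 / 2) * (-1) + u ^ 3 / (2 * (1 + u)) := by
    rw [ee, hlog, hu]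
    have : (d : ℝ) + 1 ≠ 0 := by positivity
    field_simp
    ring
  rw [key]
  have b1 : |(Real.log (1 + u) - u + u ^ 2 / 2) * (-1)| ≤ 2 * u ^ 3 := by
    rw [abs_mul, abs_neg, abs_one, mul_one]; exact log_taylor2 hu0 hu1
  have b2 : |u ^ 3 / (2 * (1 + u))| ≤ u ^ 3 := by
    rw [abs_of_pos (by positivity), div_le_iff₀ (by positivity)]
    nlinarith [pow_pos hu0 3]
  have : |(Real.log (1 + u) - u + u ^ 2 / 2) * (-1) + u ^ 3 / (2 * (1 + u))| ≤ 2 * u ^ 3 + u ^ 3 :=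
    (abs_add_le _ _).trans (by linarith)
  refine this.trans ?_
  rw [hu, div_pow, one_pow]
  have h3 : 2 * (1 / (d:ℝ)^3) + 1/(d:ℝ)^3 = 3/(d:ℝ)^3 := by ring
  linarith

lemma gg_succ {d : ℕ} (hd : 1 ≤ d) : gg (d + 1) = gg d + ee d := by
  have hd0 : (0 : ℝ) < d := by positivity
  rw [gg, gg, ee, Hs, Hs, Finset.sum_Icc_succ_top (by omega)]
  push_cast
  have : ((d : ℝ) + 1)⁻¹ = 1 / ((d : ℝ) + 1) := by rw [one_div]
  field_simp
  ring

lemma gg_diff_bound {D : ℕ} (hD : 2 ≤ D) : ∀ M, D ≤ M →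
    |gg M - gg D| ≤ 3 / 2 * (1 / ((D : ℝ) - 1) ^ 2 - 1 / ((M : ℝ) - 1) ^ 2) := by
  intro M hM
  induction M, hM using Nat.le_induction with
  | base => simp
  | succ M hM ih =>
    have hM2 : 2 ≤ M := le_trans hD hM
    have hMr : (2 : ℝ) ≤ M := by exact_mod_cast hM2
    have h1 : gg (M + 1) = gg M + ee M := gg_succ (by omega)
    have h2 : |ee M| ≤ 3 / (M : ℝ) ^ 3 := ee_bound hM2
    have step : 3 / (M : ℝ) ^ 3 ≤ 3 / 2 * (1 / ((M : ℝ) - 1) ^ 2 - 1 / (M : ℝ) ^ 2) := by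
      have p1 : (0 : ℝ) < (M : ℝ) - 1 := by linarith
      have p2 : (0 : ℝ) < (M : ℝ) := by linarith
      rw [div_sub_div _ _ (by positivity) (by positivity), ← mul_div_assoc,
        div_le_div_iff₀ (by positivity) (by positivity)]
      nlinarith [pow_pos p2 3, pow_pos p2 4, sq_nonneg ((M:ℝ))]
    have cast1 : ((M + 1 : ℕ) : ℝ) - 1 = (M : ℝ) := by push_cast; ring
    calc |gg (M + 1) - gg D| ≤ |gg M - gg D| + |ee M| := by
          rw [h1, add_sub_right_comm]; exact abs_add_le _ _
      _ ≤ 3 / 2 * (1 / ((D : ℝ) - 1) ^ 2 - 1 / ((M : ℝ) - 1) ^ 2) + 3 / (M : ℝ) ^ 3 := by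
          exact add_le_add ih h2
      _ ≤ 3 / 2 * (1 / ((D : ℝ) - 1) ^ 2 - 1 / (((M + 1 : ℕ) : ℝ) - 1) ^ 2) := by
          rw [cast1]; linarith

lemma gg_tendsto : Tendsto gg atTop (𝓝 Real.eulerMascheroniConstant) := by
  have h1 := Real.tendsto_harmonic_sub_log
  have h2 : Tendsto (fun M : ℕ => 1 / (2 * (M : ℝ))) atTop (𝓝 0) := by
    have h3 := (tendsto_natCast_atTop_atTop (R := ℝ)).const_mul_atTop (by norm_num : (0:ℝ) < 2)
    have h4 := h3.inv_tendsto_atTop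
    refine h4.congr (fun M => ?_)
    simp [one_div]
  have he : gg = fun M : ℕ => ((harmonic M : ℝ) - Real.log M) - 1 / (2 * M) := by
    funext M
    rw [gg, Hs, harmonic_eq_sum_Icc]
    push_cast
    ring
  rw [he]
  simpa using h1.sub h2

lemma gamma_bound {D : ℕ} (hD : 2 ≤ D) :
    |Real.eulerMascheroniConstant - gg D| ≤ 6 / (D : ℝ) ^ 2 := by
  have hDr : (2 : ℝ) ≤ D := by exact_mod_cast hD
  have habs : Tendsto (fun M => |gg M - gg D|) atTop (𝓝 |Real.eulerMascheroniConstant - gg D|) :=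
    ((gg_tendsto.sub tendsto_const_nhds).abs)
  have hb : ∀ᶠ M in atTop, |gg M - gg D| ≤ 3 / 2 * (1 / ((D : ℝ) - 1) ^ 2) := by
    filter_upwards [eventually_ge_atTop D] with M hM
    refine (gg_diff_bound hD M hM).trans ?_
    have : (0:ℝ) ≤ 1 / ((M : ℝ) - 1) ^ 2 := by positivity
    linarith
  have := le_of_tendsto habs hb
  refine this.trans ?_
  have p1 : (0 : ℝ) < (D : ℝ) - 1 := by linarith
  rw [mul_one_div, div_le_div_iff₀ (by positivity) (by positivity)]
  nlinarith [sq_nonneg ((D:ℝ) - 2)]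

lemma filter_divisors_eq {N D n : ℕ} (hn : n ∈ Finset.Icc 1 N) (h : ∀ d : ℕ, d ^ 2 ≤ N → d ≤ D) :
    n.divisors.filter (fun d => d ^ 2 ≤ n) = (Finset.Icc 1 D).filter (fun d => d ∣ n ∧ d ^ 2 ≤ n) := by
  obtain ⟨hn1, hnN⟩ := Finset.mem_Icc.1 hn
  ext d
  simp only [Nat.mem_divisors, Finset.mem_filter, Finset.mem_Icc]
  constructor
  · rintro ⟨⟨hdvd, hne⟩, hsq⟩
    have hd1 : 1 ≤ d := Nat.pos_of_dvd_of_pos hdvd (by omega)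
    exact ⟨⟨hd1, h d (hsq.trans hnN)⟩, hdvd, hsq⟩
  · rintro ⟨⟨hd1, hdD⟩, hdvd, hsq⟩
    exact ⟨⟨hdvd, by omega⟩, hsq⟩

lemma inner_count {N d : ℕ} (hd1 : 1 ≤ d) (hdN : d ^ 2 ≤ N) :
    ((Finset.Icc 1 N).filter (fun n => d ∣ n ∧ d ^ 2 ≤ n)).card = N / d + 1 - d := by
  have hd0 : 0 < d := hd1
  have himg : (Finset.Icc 1 N).filter (fun n => d ∣ n ∧ d ^ 2 ≤ n)
      = (Finset.Icc d (N / d)).image (fun k => d * k) := by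
    ext n
    simp only [Finset.mem_filter, Finset.mem_Icc, Finset.mem_image]
    constructor
    · rintro ⟨⟨h1, h2⟩, ⟨k, rfl⟩, h4⟩
      refine ⟨k, ⟨?_, ?_⟩, rfl⟩
      · have : d * d ≤ d * k := by nlinarith
        exact Nat.le_of_mul_le_mul_left this hd0
      · rw [Nat.le_div_iff_mul_le hd0, mul_comm]; exact h2
    · rintro ⟨k, ⟨hk1, hk2⟩, rfl⟩
      have hkN : d * k ≤ N := by rw [Nat.le_div_iff_mul_le hd0] at hk2; rw [mul_comm]; exact hk2
      refine ⟨⟨by nlinarith, hkN⟩, ⟨k, rfl⟩, by nlinarith⟩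
  rw [himg, Finset.card_image_of_injective _ (fun a b hab => Nat.eq_of_mul_eq_mul_left hd0 hab),
    Nat.card_Icc]

lemma swap_count (N D : ℕ) (h : ∀ d : ℕ, d ^ 2 ≤ N → d ≤ D) (h2 : D ^ 2 ≤ N) :
    ∑ n ∈ Finset.Icc 1 N, (n.divisors.filter (fun d => d ^ 2 ≤ n)).card
      = ∑ d ∈ Finset.Icc 1 D, (N / d + 1 - d) := by
  calc ∑ n ∈ Finset.Icc 1 N, (n.divisors.filter (fun d => d ^ 2 ≤ n)).card
      = ∑ n ∈ Finset.Icc 1 N, ((Finset.Icc 1 D).filter (fun d => d ∣ n ∧ d ^ 2 ≤ n)).card :=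
        Finset.sum_congr rfl fun n hn => by rw [filter_divisors_eq hn h]
    _ = ∑ n ∈ Finset.Icc 1 N, ∑ d ∈ Finset.Icc 1 D, if d ∣ n ∧ d ^ 2 ≤ n then 1 else 0 := by
        simp only [Finset.card_filter]
    _ = ∑ d ∈ Finset.Icc 1 D, ∑ n ∈ Finset.Icc 1 N, if d ∣ n ∧ d ^ 2 ≤ n then 1 else 0 :=
        Finset.sum_comm
    _ = ∑ d ∈ Finset.Icc 1 D, ((Finset.Icc 1 N).filter (fun n => d ∣ n ∧ d ^ 2 ≤ n)).card := by
        simp only [Finset.card_filter]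
    _ = ∑ d ∈ Finset.Icc 1 D, (N / d + 1 - d) := Finset.sum_congr rfl fun d hd => by
        obtain ⟨hd1, hdD⟩ := Finset.mem_Icc.1 hd
        exact inner_count hd1 (le_trans (Nat.pow_le_pow_left hdD 2) h2)

lemma sum_Icc_id_real (D : ℕ) : ∑ d ∈ Finset.Icc 1 D, (d : ℝ) = D * (D + 1) / 2 := by
  induction D with
  | zero => simp
  | succ n ih =>
    rw [Finset.sum_Icc_succ_top (by omega), ih]
    push_cast
    ring

lemma S_eq (x : ℝ) (hx : 1 ≤ x) :
    (∑ n ∈ Finset.Icc 1 ⌊x⌋₊, ((n.divisors.filter (fun d => d ^ 2 ≤ n)).card : ℝ))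
      = x * Hs ⌊Real.sqrt x⌋₊ - (∑ d ∈ Finset.Icc 1 ⌊Real.sqrt x⌋₊, psi (x / (d : ℝ)))
        - (⌊Real.sqrt x⌋₊ : ℝ) ^ 2 / 2 := by
  have hx0 : (0 : ℝ) ≤ x := by linarith
  set N := ⌊x⌋₊ with hN
  set D := ⌊Real.sqrt x⌋₊ with hD
  have hcond : ∀ d : ℕ, d ^ 2 ≤ N → d ≤ D := by
    intro d hdN
    apply Nat.le_floor
    apply Real.le_sqrt_of_sq_le
    calc ((d : ℝ)) ^ 2 = ((d ^ 2 : ℕ) : ℝ) := by push_cast; ring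
      _ ≤ (N : ℝ) := by exact_mod_cast hdN
      _ ≤ x := Nat.floor_le hx0
  have hD2N : D ^ 2 ≤ N := by
    rw [hN, Nat.le_floor_iff hx0]
    calc ((D ^ 2 : ℕ) : ℝ) = ((D : ℝ)) ^ 2 := by push_cast; ring
      _ ≤ Real.sqrt x ^ 2 := by
          have := Nat.floor_le (Real.sqrt_nonneg x)
          nlinarith [Real.sqrt_nonneg x]
      _ = x := Real.sq_sqrt hx0
  have hswap := swap_count N D hcond hD2N
  have hcast : (∑ n ∈ Finset.Icc 1 N, ((n.divisors.filter (fun d => d ^ 2 ≤ n)).card : ℝ))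
      = ∑ d ∈ Finset.Icc 1 D, ((N / d + 1 - d : ℕ) : ℝ) := by
    rw [← Nat.cast_sum, hswap, Nat.cast_sum]
  rw [hcast]
  have hterm : ∀ d ∈ Finset.Icc 1 D, ((N / d + 1 - d : ℕ) : ℝ)
      = x / d - psi (x / d) - 1 / 2 + 1 - d := by
    intro d hd
    obtain ⟨hd1, hdD⟩ := Finset.mem_Icc.1 hd
    have hd0 : 0 < d := hd1
    have hdN : d ^ 2 ≤ N := le_trans (Nat.pow_le_pow_left hdD 2) hD2N
    have hled : d ≤ N / d := by
      rw [Nat.le_div_iff_mul_le hd0]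
      calc d * d = d ^ 2 := (sq d).symm
        _ ≤ N := hdN
    have hfloor : N / d = ⌊x / (d : ℝ)⌋₊ := (Nat.floor_div_natCast x d).symm
    have hxd0 : (0 : ℝ) ≤ x / d := by positivity
    have hcf : ((⌊x / (d : ℝ)⌋₊ : ℝ)) = ((⌊x / (d : ℝ)⌋ : ℤ) : ℝ) :=
      natCast_floor_eq_intCast_floor hxd0
    rw [Nat.cast_sub (by omega), Nat.cast_add, hfloor, hcf]
    rw [psi]
    push_cast
    ring
  rw [Finset.sum_congr rfl hterm]
  have hre : ∀ d ∈ Finset.Icc 1 D, x / (d : ℝ) - psi (x / d) - 1 / 2 + 1 - (d : ℝ)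
      = x * (d : ℝ)⁻¹ - psi (x / d) - ((d : ℝ) - 1 / 2) := fun d _ => by
    rw [div_eq_mul_inv]; ring
  rw [Finset.sum_congr rfl hre, Finset.sum_sub_distrib, Finset.sum_sub_distrib,
    ← Finset.mul_sum, Finset.sum_sub_distrib, sum_Icc_id_real, Finset.sum_const,
    Nat.card_Icc, Nat.add_sub_cancel, nsmul_eq_mul]
  show x * Hs D - _ - _ = _
  ring

set_option maxHeartbeats 1000000 in
lemma main_bound (x : ℝ) (hx : 4 ≤ x) :
    |(∑ n ∈ Finset.Icc 1 ⌊x⌋₊, ((n.divisors.filter (fun d => d ^ 2 ≤ n)).card : ℝ)) -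
        ((1 / 2) * x * Real.log x + (Real.eulerMascheroniConstant - 1 / 2) * x +
          (1 / 2) * x ^ ((1 : ℝ) / 2))|
      ≤ |∑ d ∈ Finset.Icc 1 ⌊Real.sqrt x⌋₊, psi (x / (d : ℝ))| + 27 := by
  have hx1 : (1 : ℝ) ≤ x := by linarith
  have hx0 : (0 : ℝ) < x := by linarith
  rw [S_eq x hx1]
  set s := Real.sqrt x with hs
  set D := ⌊Real.sqrt x⌋₊ with hDdef
  set G := ∑ d ∈ Finset.Icc 1 D, psi (x / (d : ℝ)) with hG
  set γ := Real.eulerMascheroniConstant with hγ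
  have hs0 : 0 ≤ s := Real.sqrt_nonneg x
  have hs2 : (2 : ℝ) ≤ s := Real.le_sqrt_of_sq_le (by norm_num; linarith)
  have hD2 : 2 ≤ D := Nat.le_floor (by exact_mod_cast hs2)
  have hD2r : (2 : ℝ) ≤ (D : ℝ) := by exact_mod_cast hD2
  have hD0 : (0 : ℝ) < (D : ℝ) := by linarith
  have hDs : (D : ℝ) ≤ s := Nat.floor_le hs0
  have hsD1 : s < (D : ℝ) + 1 := Nat.lt_floor_add_one s
  have hxs : s ^ 2 = x := Real.sq_sqrt (le_of_lt hx0)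
  have hs2D : s ≤ 2 * (D : ℝ) := by linarith
  have hlogs : Real.log s = Real.log x / 2 := Real.log_sqrt (le_of_lt hx0)
  have hrpow : x ^ ((1 : ℝ) / 2) = s := (Real.sqrt_eq_rpow x).symm
  have hEgamma : |γ - gg D| ≤ 6 / (D : ℝ) ^ 2 := gamma_bound hD2
  clear_value s D G γ
  rw [hrpow]
  set L : ℝ := Real.log D - Real.log s with hL
  set A : ℝ := x * L + x - s * D with hA
  set B : ℝ := x / (2 * D) + x / 2 - (D : ℝ) ^ 2 / 2 - s / 2 - x + s * D with hB
  clear_value L A B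
  have hθ0 : 0 ≤ s - (D : ℝ) := by linarith
  have hθ1 : s - (D : ℝ) < 1 := by linarith
  have hθsq : (s - (D : ℝ)) ^ 2 ≤ 1 := by nlinarith
  -- bound on A
  have hlog1 : L ≤ ((D : ℝ) - s) / s := by
    have h1 : Real.log ((D : ℝ) / s) ≤ (D : ℝ) / s - 1 :=
      Real.log_le_sub_one_of_pos (by positivity)
    have h2 : Real.log ((D : ℝ) / s) = L := by
      rw [hL]; exact Real.log_div (by positivity) (by positivity)
    rw [h2] at h1
    have h3 : (D : ℝ) / s - 1 = ((D : ℝ) - s) / s := by field_simp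
    linarith [h3 ▸ h1]
  have hlog2 : ((D : ℝ) - s) / (D : ℝ) ≤ L := by
    have h1 : Real.log (s / (D : ℝ)) ≤ s / (D : ℝ) - 1 :=
      Real.log_le_sub_one_of_pos (by positivity)
    have h2 : Real.log (s / (D : ℝ)) = -L := by
      rw [Real.log_div (by positivity) (by positivity), hL]; ring
    rw [h2] at h1
    have h3 : s / (D : ℝ) - 1 = (s - (D : ℝ)) / (D : ℝ) := by field_simp
    rw [h3] at h1
    have h4 : ((D : ℝ) - s) / (D : ℝ) = -((s - (D : ℝ)) / (D : ℝ)) := by ring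
    linarith
  have hAub : A ≤ 0 := by
    have h1 : x * L ≤ x * (((D : ℝ) - s) / s) :=
      mul_le_mul_of_nonneg_left hlog1 (le_of_lt hx0)
    have h2 : x * (((D : ℝ) - s) / s) = s * ((D : ℝ) - s) := by
      rw [← hxs]; field_simp
    nlinarith
  have hAlb : -2 ≤ A := by
    have h1 : x * (((D : ℝ) - s) / (D : ℝ)) ≤ x * L :=
      mul_le_mul_of_nonneg_left hlog2 (le_of_lt hx0)
    have h2 : x * (((D : ℝ) - s) / (D : ℝ)) + x - s * D = -(s * (s - (D : ℝ)) ^ 2) / (D : ℝ) := by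
      rw [← hxs]; field_simp; ring
    have h3 : s * (s - (D : ℝ)) ^ 2 ≤ 2 * (D : ℝ) := by nlinarith
    have h4 : s * (s - (D : ℝ)) ^ 2 / (D : ℝ) ≤ 2 := by
      rw [div_le_iff₀ hD0]; linarith
    have h5 : -(s * (s - (D : ℝ)) ^ 2) / (D : ℝ) = -(s * (s - (D : ℝ)) ^ 2 / (D : ℝ)) := by ring
    rw [hA]
    linarith [h2, h1]
  -- bound on B
  have hBexpr : B = (s - D) / 2 + (s - D) ^ 2 / (2 * D) - (s - D) ^ 2 / 2 := by
    rw [hB, ← hxs]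
    field_simp
    ring
  have hBub : B ≤ 1 := by
    rw [hBexpr]
    have h1 : (s - (D : ℝ)) ^ 2 / (2 * D) ≤ 1 / 4 := by
      rw [div_le_iff₀ (by positivity)]; nlinarith
    nlinarith
  have hBlb : 0 ≤ B := by
    rw [hBexpr]
    have h1 : 0 ≤ (s - (D : ℝ)) ^ 2 / (2 * D) := by positivity
    nlinarith
  -- bound on gamma error
  have hE : |x * (gg D - γ)| ≤ 24 := by
    rw [abs_mul, abs_of_pos hx0]
    have h1 : |gg D - γ| ≤ 6 / (D : ℝ) ^ 2 := by rw [abs_sub_comm]; exact hEgamma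
    have h2 : x ≤ 4 * (D : ℝ) ^ 2 := by nlinarith
    calc x * |gg D - γ| ≤ x * (6 / (D : ℝ) ^ 2) := mul_le_mul_of_nonneg_left h1 (le_of_lt hx0)
      _ ≤ 4 * (D : ℝ) ^ 2 * (6 / (D : ℝ) ^ 2) := by
          apply mul_le_mul_of_nonneg_right h2 (by positivity)
      _ = 24 := by field_simp; ring
  -- the key identity
  have key : x * Hs D - G - (D : ℝ) ^ 2 / 2 -
        ((1 / 2) * x * Real.log x + (γ - 1 / 2) * x + (1 / 2) * s)
      = x * (gg D - γ) + (-G) + A + B := by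
    rw [gg, hA, hB, hL]
    have hlx : Real.log x = 2 * Real.log s := by rw [hlogs]; ring
    rw [hlx]
    have hD0' : (D : ℝ) ≠ 0 := ne_of_gt hD0
    field_simp
    ring
  rw [key]
  have t1 : |x * (gg D - γ) + (-G) + A + B| ≤ |x * (gg D - γ) + (-G) + A| + |B| := abs_add_le _ _
  have t2 : |x * (gg D - γ) + (-G) + A| ≤ |x * (gg D - γ) + (-G)| + |A| := abs_add_le _ _
  have t3 : |x * (gg D - γ) + (-G)| ≤ |x * (gg D - γ)| + |(-G)| := abs_add_le _ _
  have hAabs : |A| ≤ 2 := abs_le.2 ⟨hAlb, by linarith⟩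
  have hBabs : |B| ≤ 1 := abs_le.2 ⟨by linarith, hBub⟩
  rw [abs_neg] at t3
  linarith

end Aux

theorem stmt_7
    (h : ∀ ε : ℝ, 0 < ε →
      (fun x : ℝ => ∑ d ∈ Finset.Icc 1 ⌊Real.sqrt x⌋₊, psi (x / (d : ℝ))) =O[atTop]
        fun x : ℝ => x ^ ((1 : ℝ) / 4 + ε)) :
    ∀ ε : ℝ, 0 < ε →
      (fun x : ℝ =>
          (∑ n ∈ Finset.Icc 1 ⌊x⌋₊, ((n.divisors.filter (fun d => d ^ 2 ≤ n)).card : ℝ)) -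
            ((1 / 2) * x * Real.log x + (Real.eulerMascheroniConstant - 1 / 2) * x +
              (1 / 2) * x ^ ((1 : ℝ) / 2))) =O[atTop]
        fun x : ℝ => x ^ ((1 : ℝ) / 4 + ε) := by
  intro ε hε
  have hO := h ε hε
  rw [Asymptotics.isBigO_iff] at hO ⊢
  obtain ⟨C, hC⟩ := hO
  refine ⟨|C| + 27, ?_⟩
  filter_upwards [hC, eventually_ge_atTop (4 : ℝ), eventually_ge_atTop (1 : ℝ)]
    with x hCx hx4 hx1
  have hp0 : (0 : ℝ) ≤ (1 : ℝ) / 4 + ε := by linarith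
  have hg0 : (0 : ℝ) ≤ x ^ ((1 : ℝ) / 4 + ε) := Real.rpow_nonneg (by linarith) _
  have hg1 : (1 : ℝ) ≤ x ^ ((1 : ℝ) / 4 + ε) := Real.one_le_rpow hx1 hp0
  have hmb := main_bound x hx4
  have hGb : |∑ d ∈ Finset.Icc 1 ⌊Real.sqrt x⌋₊, psi (x / (d : ℝ))|
      ≤ |C| * (x ^ ((1 : ℝ) / 4 + ε)) := by
    have := hCx
    rw [Real.norm_eq_abs, Real.norm_eq_abs, abs_of_nonneg hg0] at this
    calc |∑ d ∈ Finset.Icc 1 ⌊Real.sqrt x⌋₊, psi (x / (d : ℝ))|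
        ≤ C * x ^ ((1 : ℝ) / 4 + ε) := this
      _ ≤ |C| * x ^ ((1 : ℝ) / 4 + ε) := mul_le_mul_of_nonneg_right (le_abs_self C) hg0
  rw [Real.norm_eq_abs, Real.norm_eq_abs, abs_of_nonneg hg0]
  calc |(∑ n ∈ Finset.Icc 1 ⌊x⌋₊, ((n.divisors.filter (fun d => d ^ 2 ≤ n)).card : ℝ)) -
        ((1 / 2) * x * Real.log x + (Real.eulerMascheroniConstant - 1 / 2) * x +
          (1 / 2) * x ^ ((1 : ℝ) / 2))|
      ≤ |∑ d ∈ Finset.Icc 1 ⌊Real.sqrt x⌋₊, psi (x / (d : ℝ))| + 27 := hmb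
    _ ≤ |C| * (x ^ ((1 : ℝ) / 4 + ε)) + 27 * (x ^ ((1 : ℝ) / 4 + ε)) := by
        have h27 : (27 : ℝ) ≤ 27 * (x ^ ((1 : ℝ) / 4 + ε)) := by nlinarith
        linarith
    _ = (|C| + 27) * x ^ ((1 : ℝ) / 4 + ε) := by ring
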